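/- arXiv:0904.4413 — 5 statements merged into one kernel-verified Lean document; each statement's English description precedes it below -/
import Mathlib

section
/- Let R be a commutative ring with unity, n > 0, and let d_1 = n > d_2 > ... > d_h be integers with d_{i+1} | d_i for all i, setting e_i = d_i/d_{i+1} for i < h and e_h = +∞. For each i let g_i be a monic polynomial of R[y] of degree n/d_i. Then every monic polynomial f of degree n in R[y] can be uniquely written as f = Σ_{θ ∈ B} a_θ g_1^{θ_1}···g_h^{θ_h} with a_θ ∈ R, where B = {θ ∈ ℕ^h : θ_i < e_i for all i}. -/
open Polynomial

section Aux

/-- Mixed-radix digit extraction: digit `i` of `k` with respect to weights `M`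
and bases `E`, where the last digit (`i = h - 1`) is unbounded. -/
def mrDigit (h : ℕ) (M E : ℕ → ℕ) (k i : ℕ) : ℕ :=
  if i + 1 < h then (k / M i) % E i else k / M i

variable {h : ℕ} (M E : ℕ → ℕ) (hh : 0 < h) (hM0 : M 0 = 1)
  (hME : ∀ i, i + 1 < h → M (i + 1) = M i * E i)
  (hE : ∀ i, i + 1 < h → 0 < E i)

include hh hM0 hME hE in
theorem mrDigit_sum (k : ℕ) :
    ∑ i ∈ Finset.range h, mrDigit h M E k i * M i = k := by
  have key : ∀ j, j < h →
      (∑ i ∈ Finset.range j, mrDigit h M E k i * M i) + (k / M j) * M j = k := by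
    intro j
    induction j with
    | zero => intro _; simp [hM0]
    | succ j ih =>
      intro hj
      have hj' : j < h := by omega
      rw [Finset.sum_range_succ]
      have hd : mrDigit h M E k j = (k / M j) % E j := by
        unfold mrDigit; rw [if_pos hj]
      rw [hd]
      have hdiv : k / M (j + 1) = (k / M j) / E j := by
        rw [hME j hj, Nat.div_div_eq_div_mul]
      rw [hdiv, hME j hj]
      have heq : (k / M j) % E j * M j + (k / M j) / E j * (M j * E j)
          = (k / M j) * M j := by
        conv_rhs => rw [← Nat.mod_add_div (k / M j) (E j)]
        ring
      rw [add_assoc, heq]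
      exact ih hj'
  obtain ⟨h', rfl⟩ : ∃ h', h = h' + 1 := ⟨h - 1, by omega⟩
  have hfin := key h' (by omega)
  have hlast : mrDigit (h' + 1) M E k h' = k / M h' := by
    unfold mrDigit; rw [if_neg (by omega)]
  rw [Finset.sum_range_succ, hlast, hfin]

include hM0 hME hE in
theorem mrDigit_of_bounded (θ : ℕ → ℕ) (hθ : ∀ i, i + 1 < h → θ i < E i) :
    ∀ j, j < h → mrDigit h M E (∑ i ∈ Finset.range h, θ i * M i) j = θ j := by
  have hMpos : ∀ i, i < h → 0 < M i := by
    intro i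
    induction i with
    | zero => intro _; omega
    | succ i ih =>
      intro hi
      rw [hME i hi]
      exact Nat.mul_pos (ih (by omega)) (hE i hi)
  have hMdvd : ∀ j i, j ≤ i → i < h → M j ∣ M i := by
    intro j i hji hi
    induction i with
    | zero =>
      have hj0 : j = 0 := by omega
      subst hj0; exact dvd_rfl
    | succ i ih =>
      rcases Nat.lt_or_ge j (i + 1) with hlt | hge
      · rw [hME i hi]
        exact Dvd.dvd.mul_right (ih (by omega) (by omega)) _
      · have : j = i + 1 := by omega
        subst this; exact dvd_rfl
  have hS : ∀ j, j < h → (∑ i ∈ Finset.range j, θ i * M i) < M j := by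
    intro j
    induction j with
    | zero => intro _; simp; omega
    | succ j ih =>
      intro hj
      rw [Finset.sum_range_succ, hME j hj]
      have h1 := ih (by omega)
      have h2 := hθ j hj
      have hMp := hMpos j (by omega)
      calc (∑ i ∈ Finset.range j, θ i * M i) + θ j * M j
          < M j + θ j * M j := by omega
        _ = (θ j + 1) * M j := by ring
        _ ≤ E j * M j := Nat.mul_le_mul_right _ (by omega)
        _ = M j * E j := by ring
  set k := ∑ i ∈ Finset.range h, θ i * M i with hk
  have hsplit : ∀ j, j ≤ h → k = (∑ i ∈ Finset.range j, θ i * M i)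
      + ∑ i ∈ Finset.Ico j h, θ i * M i := by
    intro j hj
    rw [hk, Finset.range_eq_Ico,
      ← Finset.sum_Ico_consecutive _ (Nat.zero_le j) hj, Finset.range_eq_Ico]
  have hTdvd : ∀ j, j ≤ h → M j ∣ ∑ i ∈ Finset.Ico j h, θ i * M i := by
    intro j hj
    apply Finset.dvd_sum
    intro i hi
    rw [Finset.mem_Ico] at hi
    exact Dvd.dvd.mul_left (hMdvd j i hi.1 hi.2) _
  have hkdiv : ∀ j, j < h → k / M j = (∑ i ∈ Finset.Ico j h, θ i * M i) / M j := by
    intro j hj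
    rw [hsplit j (le_of_lt hj), Nat.add_div_of_dvd_left (hTdvd j (le_of_lt hj)),
      Nat.div_eq_of_lt (hS j hj), zero_add]
  intro j hj
  have hT := hkdiv j hj
  by_cases hj1 : j + 1 < h
  · unfold mrDigit
    rw [if_pos hj1, hT]
    obtain ⟨c, hc⟩ := hTdvd (j + 1) (by omega)
    rw [Finset.sum_eq_sum_Ico_succ_bot hj, hc, hME j hj1,
      show θ j * M j + M j * E j * c = (θ j + E j * c) * M j by ring,
      Nat.mul_div_cancel _ (hMpos j hj), Nat.add_mul_mod_self_left]
    exact Nat.mod_eq_of_lt (hθ j hj1)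
  · unfold mrDigit
    rw [if_neg hj1, hT, show h = j + 1 from by omega, Nat.Ico_succ_singleton,
      Finset.sum_singleton, Nat.mul_div_cancel _ (hMpos j hj)]

/-- A family of monic polynomials with `natDegree (P k) = k` gives unique
representations of every polynomial. -/
theorem monic_family_repr {R : Type*} [CommRing R] (P : ℕ → R[X])
    (hmon : ∀ k, (P k).Monic) (hdeg : ∀ k, (P k).natDegree = k) (f : R[X]) :
    ∃! c : ℕ →₀ R, f = c.sum fun k r => C r * P k := by
  have hex : ∀ N (f : R[X]), f.natDegree < N →
      ∃ c : ℕ →₀ R, f = c.sum fun k r => C r * P k := by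
    intro N
    induction N with
    | zero => intro f hf; omega
    | succ N ih =>
      intro f hf
      by_cases h0 : f = 0
      · exact ⟨0, by simp [h0]⟩
      set k := f.natDegree with hk
      set r := f.leadingCoeff with hr
      set g' := f - C r * P k with hg'
      have hco : ∀ m, k ≤ m → g'.coeff m = 0 := by
        intro m hm
        rcases eq_or_lt_of_le hm with heq | hlt
        · subst heq
          simp only [hg', coeff_sub, coeff_C_mul]
          have : (P k).coeff k = 1 := by
            have := (hmon k).coeff_natDegree
            rwa [hdeg k] at this
          rw [this, mul_one, hr, hk, Polynomial.coeff_natDegree, sub_self]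
        · simp only [hg', coeff_sub, coeff_C_mul]
          rw [coeff_eq_zero_of_natDegree_lt (by omega),
            coeff_eq_zero_of_natDegree_lt (by rw [hdeg]; omega)]
          ring
      have key : ∀ c' : ℕ →₀ R, g' = c'.sum (fun k r => C r * P k) →
          ∃ c : ℕ →₀ R, f = c.sum fun k r => C r * P k := by
        intro c' hc'
        refine ⟨c' + Finsupp.single k r, ?_⟩
        rw [Finsupp.sum_add_index' (by intro a; simp) (by intro a b₁ b₂; rw [map_add]; ring),
          Finsupp.sum_single_index (by simp), ← hc', hg']
        ring
      by_cases hz : g' = 0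
      · exact key 0 (by simp [hz])
      · have hdg : g'.natDegree < k := by
          rcases lt_or_ge g'.natDegree k with hlt | hge
          · exact hlt
          · exact absurd (hco _ hge) (Polynomial.leadingCoeff_ne_zero.mpr hz)
        obtain ⟨c', hc'⟩ := ih g' (by omega)
        exact key c' hc'
  have hzero : ∀ c : ℕ →₀ R, (c.sum fun k r => C r * P k) = 0 → c = 0 := by
    intro c hc
    by_contra hne
    have hs : c.support.Nonempty := Finsupp.support_nonempty_iff.mpr hne
    set k := c.support.max' hs with hk
    have : (c.sum fun k r => C r * P k).coeff k = c k := by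
      rw [Finsupp.sum, Polynomial.finset_sum_coeff]
      rw [Finset.sum_eq_single k]
      · have : (P k).coeff k = 1 := by
          have := (hmon k).coeff_natDegree; rwa [hdeg k] at this
        simp [this]
      · intro j hj hjne
        have hjle : j ≤ k := Finset.le_max' _ _ hj
        rw [coeff_C_mul, coeff_eq_zero_of_natDegree_lt (by rw [hdeg]; omega), mul_zero]
      · intro hk'; exact absurd (Finset.max'_mem _ hs) hk'
    rw [hc] at this
    exact (Finsupp.mem_support_iff.mp (Finset.max'_mem _ hs)) this.symm
  obtain ⟨c, hc⟩ := hex (f.natDegree + 1) f (by omega)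
  refine ⟨c, hc, ?_⟩
  intro c' hc'
  have hsub : ((c' - c).sum fun k r => C r * P k) = 0 := by
    rw [Finsupp.sum_sub_index (by intro a b₁ b₂; rw [map_sub]; ring), ← hc, ← hc', sub_self]
  have := hzero _ hsub
  rwa [sub_eq_zero] at this

end Aux

/-- **G-adic expansion.**  Let `R` be a commutative ring with unity, `n > 0`, and let
`d 0 = n > d 1 > … > d (h-1)` be integers with `d (i+1) ∣ d i`.  For each `i < h` let
`g i` be a monic polynomial of degree `n / d i`.  Then every monic polynomial `f` of
degree `n` can be uniquely written as `f = Σ_{θ ∈ B} a_θ • g_1^{θ_1} ⋯ g_h^{θ_h}`,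
with `a_θ ∈ R`, where `B = {θ : θ_i < e_i = d_i / d_{i+1}` for `i < h-1}` (no
constraint on the last component, corresponding to `e_h = +∞`). -/
theorem G_adic_expansion {R : Type*} [CommRing R] (n h : ℕ) (hn : 0 < n) (hh : 0 < h)
    (d : ℕ → ℕ) (hd0 : d 0 = n)
    (hdesc : ∀ i, i + 1 < h → d (i + 1) < d i)
    (hdvd : ∀ i, i + 1 < h → d (i + 1) ∣ d i)
    (g : Fin h → R[X]) (hg : ∀ i, (g i).Monic)
    (hgdeg : ∀ i : Fin h, (g i).natDegree = n / d i)
    (f : R[X]) (hf : f.Monic) (hfdeg : f.natDegree = n) :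
    ∃! a : (Fin h → ℕ) →₀ R,
      (∀ θ ∈ a.support, ∀ i : Fin h, (i : ℕ) + 1 < h → θ i < d i / d ((i : ℕ) + 1)) ∧
      f = a.sum fun θ c => C c * ∏ i : Fin h, g i ^ θ i := by
  rcases subsingleton_or_nontrivial R with hsub | hnt
  · exfalso
    have : f = 0 := Subsingleton.elim f 0
    rw [this, natDegree_zero] at hfdeg
    omega
  -- basic arithmetic facts
  have hdpos : ∀ i, i < h → 0 < d i := by
    intro i
    induction i with
    | zero => intro _; omega
    | succ i ih =>
      intro hi
      exact Nat.pos_of_dvd_of_pos (hdvd i hi) (ih (by omega))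
  have hdn : ∀ i, i < h → d i ∣ n := by
    intro i
    induction i with
    | zero => intro _; rw [hd0]
    | succ i ih =>
      intro hi
      exact (hdvd i hi).trans (ih (by omega))
  set M : ℕ → ℕ := fun i => n / d i with hM
  set E : ℕ → ℕ := fun i => d i / d (i + 1) with hEdef
  have hM0 : M 0 = 1 := by simp [hM, hd0, Nat.div_self hn]
  have hME : ∀ i, i + 1 < h → M (i + 1) = M i * E i := by
    intro i hi
    obtain ⟨a, ha⟩ := hdn i (by omega)
    obtain ⟨e, he⟩ := hdvd i hi
    have hdi : 0 < d i := hdpos i (by omega)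
    have hdi1 : 0 < d (i + 1) := hdpos (i + 1) hi
    have h1 : n / d (i + 1) = e * a := by
      rw [ha, he, mul_assoc, Nat.mul_div_cancel_left _ hdi1]
    have h2 : n / d i = a := by rw [ha, Nat.mul_div_cancel_left _ hdi]
    have h3 : d i / d (i + 1) = e := by rw [he, Nat.mul_div_cancel_left _ hdi1]
    show n / d (i + 1) = n / d i * (d i / d (i + 1))
    rw [h1, h2, h3, mul_comm]
  have hE : ∀ i, i + 1 < h → 0 < E i := by
    intro i hi
    exact Nat.div_pos (Nat.le_of_lt (hdesc i hi)) (hdpos (i + 1) hi)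
  -- the associated family of monic polynomials of every degree
  set P : ℕ → R[X] := fun k => ∏ i : Fin h, g i ^ mrDigit h M E k i with hP
  have hPmon : ∀ k, (P k).Monic := fun k =>
    monic_prod_of_monic _ _ fun i _ => (hg i).pow _
  have hPdeg : ∀ k, (P k).natDegree = k := by
    intro k
    show (∏ i : Fin h, g i ^ mrDigit h M E k ↑i).natDegree = k
    rw [Polynomial.natDegree_prod_of_monic _ _ fun i _ => (hg i).pow _]
    have hterm : ∀ i : Fin h, (g i ^ mrDigit h M E k ↑i).natDegree
        = mrDigit h M E k ↑i * (n / d ↑i) := by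
      intro i
      rw [(hg i).natDegree_pow, hgdeg i]
    rw [Finset.sum_congr rfl fun i _ => hterm i]
    rw [Fin.sum_univ_eq_sum_range (fun i => mrDigit h M E k i * (n / d i)) h]
    exact mrDigit_sum M E hh hM0 hME hE k
  obtain ⟨c, hcf, hcu⟩ := monic_family_repr P hPmon hPdeg f
  -- the digit map and its section
  have hws : ∀ k, (∑ i : Fin h, mrDigit h M E k i * M i) = k := by
    intro k
    rw [Fin.sum_univ_eq_sum_range (fun i => mrDigit h M E k i * M i) h]
    exact mrDigit_sum M E hh hM0 hME hE k
  set rep : ℕ → Fin h → ℕ := fun k i => mrDigit h M E k i with hrep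
  have hrepinj : Function.Injective rep := by
    intro k k' hkk
    have h1 := hws k
    have h2 := hws k'
    rw [← h1, ← h2]
    apply Finset.sum_congr rfl
    intro i _
    rw [show mrDigit h M E k ↑i = rep k i from rfl,
      show mrDigit h M E k' ↑i = rep k' i from rfl, hkk]
  -- `rep` inverts the weight map on bounded multi-indices
  have hkey : ∀ θ : Fin h → ℕ, (∀ i : Fin h, (i : ℕ) + 1 < h → θ i < E i) →
      rep (∑ i : Fin h, θ i * M i) = θ := by
    intro θ hθ
    set θ' : ℕ → ℕ := fun i => if hi : i < h then θ ⟨i, hi⟩ else 0 with hθ'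
    have hwθ : (∑ i : Fin h, θ i * M i) = ∑ i ∈ Finset.range h, θ' i * M i := by
      rw [← Fin.sum_univ_eq_sum_range (fun i => θ' i * M i) h]
      apply Finset.sum_congr rfl
      intro i _
      simp [hθ', i.isLt]
    have hbd : ∀ i, i + 1 < h → θ' i < E i := by
      intro i hi
      have hih : i < h := by omega
      simp only [hθ', dif_pos hih]
      exact hθ ⟨i, hih⟩ hi
    funext i
    have := mrDigit_of_bounded M E hM0 hME hE θ' hbd i i.isLt
    rw [hrep]
    show mrDigit h M E (∑ i : Fin h, θ i * M i) ↑i = θ i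
    rw [hwθ, this]
    simp [hθ', i.isLt]
  -- the candidate expansion
  set a : (Fin h → ℕ) →₀ R := Finsupp.embDomain ⟨rep, hrepinj⟩ c with ha
  have hab : ∀ θ ∈ a.support, ∀ i : Fin h, (i : ℕ) + 1 < h →
      θ i < d ↑i / d ((i : ℕ) + 1) := by
    intro θ hθ i hi
    rw [ha, Finsupp.support_embDomain, Finset.mem_map] at hθ
    obtain ⟨k, _, rfl⟩ := hθ
    show rep k i < E ↑i
    rw [hrep]
    show mrDigit h M E k ↑i < E ↑i
    unfold mrDigit
    rw [if_pos hi]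
    exact Nat.mod_lt _ (hE ↑i hi)
  have haf : f = a.sum fun θ r => C r * ∏ i : Fin h, g i ^ θ i := by
    rw [ha, Finsupp.sum_embDomain]
    exact hcf
  refine ⟨a, ⟨hab, haf⟩, ?_⟩
  rintro a' ⟨ha'b, ha'f⟩
  -- map a' to a ℕ-indexed finsupp via the weight function
  set w : (Fin h → ℕ) → ℕ := fun θ => ∑ i : Fin h, θ i * M i with hw
  have hfa' : f = (a'.mapDomain w).sum fun k r => C r * P k := by
    rw [Finsupp.sum_mapDomain_index (by intro b; simp)
      (by intro b m₁ m₂; rw [map_add]; ring)]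
    rw [ha'f]
    apply Finsupp.sum_congr
    intro θ hθs
    congr 1
    apply Finset.prod_congr rfl
    intro i _
    have hrepθ := hkey θ (ha'b θ hθs)
    exact congrArg (fun m => g i ^ m) (congrFun hrepθ i).symm
  have hc'c : a'.mapDomain w = c := hcu _ hfa'
  have hac : a.mapDomain w = c := by
    rw [ha, Finsupp.embDomain_eq_mapDomain, ← Finsupp.mapDomain_comp]
    have hwr : w ∘ ((⟨rep, hrepinj⟩ : ℕ ↪ (Fin h → ℕ)) : ℕ → (Fin h → ℕ)) = id := by
      funext k
      exact hws k
    rw [hwr, Finsupp.mapDomain_id]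
  have hwinj : Set.InjOn w {θ : Fin h → ℕ |
      ∀ i : Fin h, (i : ℕ) + 1 < h → θ i < E i} := by
    intro θ hθ θ'' hθ'' hww
    have hww' : (∑ i : Fin h, θ i * M ↑i) = ∑ i : Fin h, θ'' i * M ↑i := hww
    rw [← hkey θ hθ, ← hkey θ'' hθ'', hww']
  exact Finsupp.mapDomain_injOn _ hwinj (fun θ hθ => ha'b θ hθ)
    (fun θ hθ => hab θ hθ) (by rw [hc'c, hac])
end

section
/- Let R be a commutative ring in which d is a unit, f monic of degree n in R[y], d | n, g monic of degree n/d. Then the first coefficient a_1 of the g-adic expansion of f vanishes if and only if deg_y(f - g^d) < n - n/d. -/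
open Polynomial

/-- Let `R` be a commutative ring in which `d` is a unit, `f` monic of degree `n`,
`d ∣ n`, `g` monic of degree `n / d`, and let `f = g^d + a_1 g^{d-1} + … + a_d` be the
`g`-adic expansion of `f`.  Then `a_1 = 0` if and only if
`deg_y (f - g^d) < n - n/d`. -/
theorem approximate_root_iff_degree_lt {R : Type*} [CommRing R] (n d : ℕ)
    (hn : 0 < n) (hd : 0 < d) (hdvd : d ∣ n) (hinv : Invertible (d : R)) (f g : R[X])
    (hf : f.Monic) (hfdeg : f.natDegree = n) (hg : g.Monic) (hgdeg : g.natDegree = n / d)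
    (a : Fin d → R[X])
    (hadeg : ∀ i, (a i).degree < ((n / d : ℕ) : WithBot ℕ))
    (hexp : f = g ^ d + ∑ i : Fin d, a i * g ^ (d - ((i : ℕ) + 1))) :
    a ⟨0, hd⟩ = 0 ↔ (f - g ^ d).degree < ((n - n / d : ℕ) : WithBot ℕ) := by
  rcases subsingleton_or_nontrivial R with hR | hR
  · constructor
    · intro _
      rw [Subsingleton.elim (f - g ^ d) 0, degree_zero]
      exact WithBot.bot_lt_coe _
    · intro _; exact Subsingleton.elim _ _
  set m := n / d with hm
  have hmd : m * d = n := Nat.div_mul_cancel hdvd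
  have hsum : f - g ^ d = ∑ i : Fin d, a i * g ^ (d - ((i : ℕ) + 1)) := by
    rw [hexp]; ring
  have hgk : ∀ k, (g ^ k).degree = ((k * m : ℕ) : WithBot ℕ) := fun k => by
    rw [degree_eq_natDegree (hg.pow k).ne_zero, hg.natDegree_pow, hgdeg]
  have hnm : n - m = (d - 1) * m := by
    rw [← hmd, Nat.sub_mul, one_mul, Nat.mul_comm]
  have hterm : ∀ i : Fin d, 1 ≤ (i : ℕ) →
      (a i * g ^ (d - ((i : ℕ) + 1))).degree < ((n - m : ℕ) : WithBot ℕ) := by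
    intro i hi
    refine lt_of_le_of_lt (degree_mul_le _ _) ?_
    rw [hgk]
    have h1 : (a i).degree + (((d - ((i : ℕ) + 1)) * m : ℕ) : WithBot ℕ)
        < ((m : ℕ) : WithBot ℕ) + (((d - ((i : ℕ) + 1)) * m : ℕ) : WithBot ℕ) :=
      WithBot.add_lt_add_right (WithBot.coe_ne_bot) (hadeg i)
    refine h1.trans_le ?_
    rw [← Nat.cast_add, Nat.cast_le]
    have hid : (i : ℕ) < d := i.2
    have hj1 : d - ((i : ℕ) + 1) + 1 ≤ d - 1 := by omega
    rw [hnm]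
    calc m + (d - ((i : ℕ) + 1)) * m = (d - ((i : ℕ) + 1) + 1) * m := by ring
      _ ≤ (d - 1) * m := Nat.mul_le_mul_right m hj1
  constructor
  · intro h0
    rw [hsum]
    refine lt_of_le_of_lt (degree_sum_le _ _) ?_
    rw [Finset.sup_lt_iff (WithBot.bot_lt_coe _)]
    intro i _
    by_cases hi : (i : ℕ) = 0
    · have : i = ⟨0, hd⟩ := Fin.ext hi
      rw [this, h0, zero_mul, degree_zero]
      exact WithBot.bot_lt_coe _
    · exact hterm i (by omega)
  · intro hdeg
    by_contra h0
    have hS : (∑ i ∈ Finset.univ.erase (⟨0, hd⟩ : Fin d),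
        a i * g ^ (d - ((i : ℕ) + 1))).degree < ((n - m : ℕ) : WithBot ℕ) := by
      refine lt_of_le_of_lt (degree_sum_le _ _) ?_
      rw [Finset.sup_lt_iff (WithBot.bot_lt_coe _)]
      intro i hi
      have : (i : ℕ) ≠ 0 := fun h => (Finset.mem_erase.mp hi).1 (Fin.ext h)
      exact hterm i (by omega)
    have hsplit : a ⟨0, hd⟩ * g ^ (d - 1) =
        (f - g ^ d) - ∑ i ∈ Finset.univ.erase (⟨0, hd⟩ : Fin d),
          a i * g ^ (d - ((i : ℕ) + 1)) := by
      rw [hsum, ← Finset.add_sum_erase _ _ (Finset.mem_univ (⟨0, hd⟩ : Fin d))]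
      ring
    have hlt : (a ⟨0, hd⟩ * g ^ (d - 1)).degree < ((n - m : ℕ) : WithBot ℕ) := by
      rw [hsplit]
      exact lt_of_le_of_lt (degree_sub_le _ _) (max_lt hdeg hS)
    have heq : (a ⟨0, hd⟩ * g ^ (d - 1)).degree
        = (a ⟨0, hd⟩).degree + (((d - 1) * m : ℕ) : WithBot ℕ) := by
      rw [← hgk]
      exact degree_mul' (by
        rw [(hg.pow (d - 1)).leadingCoeff, mul_one]
        exact leadingCoeff_ne_zero.mpr h0)
    rw [heq, degree_eq_natDegree h0, ← Nat.cast_add, hnm] at hlt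
    rw [Nat.cast_lt] at hlt
    omega
end

section
/- Let R be a commutative ring containing the rationals (or in which d is invertible), f a monic polynomial of degree n in R[y], and d a positive divisor of n. Then there exists a unique monic polynomial g of degree n/d in R[y] such that deg_y(f - g^d) < n - n/d (the d-th approximate root of f). -/
open Polynomial

/-- **Existence and uniqueness of the approximate root.**  Let `R` be a commutative ring
in which `d` is invertible, `f` a monic polynomial of degree `n`, and `d` a positive
divisor of `n`.  Then there exists a unique monic polynomial `g` of degree `n / d` such
that `deg_y (f - g^d) < n - n/d`; this is the `d`-th approximate root of `f`. -/
theorem approximate_root_exists_unique {R : Type*} [CommRing R] (n d : ℕ)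
    (hn : 0 < n) (hd : 0 < d) (hdvd : d ∣ n) (hinv : Invertible (d : R))
    (f : R[X]) (hf : f.Monic) (hfdeg : f.natDegree = n) :
    ∃! g : R[X], g.Monic ∧ g.natDegree = n / d ∧
      (f - g ^ d).degree < ((n - n / d : ℕ) : WithBot ℕ) := by
  have hR : Nontrivial R := by
    rcases subsingleton_or_nontrivial R with h | h
    · exfalso
      have h0 : f = 0 := Subsingleton.elim f 0
      rw [h0, natDegree_zero] at hfdeg
      omega
    · exact h
  set m := n / d with hm
  have hnm : d * m = n := Nat.mul_div_cancel' hdvd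
  have hmn : m ≤ n := Nat.div_le_self _ _
  have hm0 : 0 < m := Nat.div_pos (Nat.le_of_dvd hn hdvd) hd
  obtain ⟨e, rfl⟩ : ∃ e, d = e + 1 := ⟨d - 1, by omega⟩
  have hM : e * m + m = n := by rw [← hnm]; ring
  -- Existence, by building up the coefficients one at a time
  have exist : ∀ k, k ≤ m → ∃ g : R[X], g.Monic ∧ g.natDegree = m ∧
      ∀ j, n - k ≤ j → (f - g ^ (e + 1)).coeff j = 0 := by
    intro k
    induction k with
    | zero =>
      intro _
      refine ⟨X ^ m, monic_X_pow m, natDegree_X_pow m, fun j hj => ?_⟩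
      have hXd : ((X : R[X]) ^ m) ^ (e + 1) = X ^ n := by
        rw [← pow_mul, mul_comm m (e + 1), hnm]
      rw [hXd, coeff_sub, coeff_X_pow]
      rcases eq_or_lt_of_le (show n ≤ j by omega) with h | h
      · rw [if_pos h.symm, ← h, ← hfdeg, hf.coeff_natDegree]; ring
      · rw [if_neg (by omega), coeff_eq_zero_of_natDegree_lt (by omega : f.natDegree < j)]
        ring
    | succ k ih =>
      intro hk1
      obtain ⟨g, hg, hgdeg, hcoeff⟩ := ih (by omega)
      set w := m - (k + 1) with hw
      set c := ⅟((e + 1 : ℕ) : R) * (f - g ^ (e + 1)).coeff (n - (k + 1)) with hc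
      set t := (C c * X ^ w : R[X]) with ht
      have htdeg : t.degree ≤ (w : WithBot ℕ) := degree_C_mul_X_pow_le w c
      have htg : t.degree < g.degree := by
        refine lt_of_le_of_lt htdeg ?_
        rw [degree_eq_natDegree hg.ne_zero, hgdeg]
        exact_mod_cast (by omega : w < m)
      have hgt : (g + t).Monic := hg.add_of_left htg
      have hgtdeg : (g + t).natDegree = m := by
        rw [natDegree_eq_of_degree_eq (degree_add_eq_left_of_degree_lt htg), hgdeg]
      have htnd : t.natDegree ≤ w :=
        natDegree_le_iff_degree_le.mpr htdeg
      refine ⟨g + t, hgt, hgtdeg, fun j hj => ?_⟩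
      have hwj : w ≤ j := by omega
      -- expand (g+t)^(e+1)
      rw [coeff_sub, add_pow, Finset.sum_range_succ, Finset.sum_range_succ]
      have hsum0 : (∑ i ∈ Finset.range e,
          g ^ i * t ^ (e + 1 - i) * (((e + 1).choose i : R[X]))).coeff j = 0 := by
        rw [finset_sum_coeff]
        refine Finset.sum_eq_zero fun i hi => ?_
        rw [Finset.mem_range] at hi
        apply coeff_eq_zero_of_natDegree_lt
        obtain ⟨r, hr⟩ : ∃ r, e = i + r + 1 := ⟨e - i - 1, by omega⟩
        have h1 : (g ^ i * t ^ (e + 1 - i) * (((e + 1).choose i : R[X]))).natDegree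
            ≤ i * m + (r + 2) * w := by
          refine natDegree_mul_le.trans ?_
          have h2 : (g ^ i * t ^ (e + 1 - i)).natDegree ≤ i * m + (r + 2) * w := by
            refine natDegree_mul_le.trans ?_
            have h3 : (g ^ i).natDegree = i * m := by rw [hg.natDegree_pow, hgdeg]
            have h4 : (t ^ (e + 1 - i)).natDegree ≤ (r + 2) * w := by
              refine natDegree_pow_le.trans ?_
              have : e + 1 - i = r + 2 := by omega
              rw [this]
              exact Nat.mul_le_mul_left _ htnd
            omega
          simpa [natDegree_natCast] using h2
        refine lt_of_le_of_lt h1 ?_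
        have hA : n = i * m + (r + 2) * w + (r + 2) * (k + 1) := by
          have hmw : m = w + (k + 1) := by omega
          rw [← hnm, hr, hmw]; ring
        have hprod : k + 2 ≤ (r + 2) * (k + 1) :=
          le_trans (by omega) (Nat.mul_le_mul_right (k + 1) (by omega : 2 ≤ r + 2))
        have hjn' : n ≤ j + (k + 1) := by omega
        linarith
      have hterm1 : (g ^ e * t ^ (e + 1 - e) * (((e + 1).choose e : R[X]))).coeff j
          = if j = n - (k + 1) then ((e + 1 : ℕ) : R) * c else 0 := by
        rw [Nat.choose_succ_self_right, Nat.add_sub_cancel_left, pow_one, ht]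
        have hrw : g ^ e * (C c * X ^ w) * (((e + 1 : ℕ) : R[X]))
            = C (((e + 1 : ℕ) : R) * c) * (g ^ e * X ^ w) := by
          rw [← C_eq_natCast]
          simp only [C_mul]
          ring
        rw [hrw, coeff_C_mul, mul_assoc, coeff_mul_X_pow', if_pos hwj]
        have hge : (g ^ e).natDegree = e * m := by rw [hg.natDegree_pow, hgdeg]
        rcases eq_or_lt_of_le hj with h | h
        · have hjw : j - w = e * m := by omega
          rw [if_pos h.symm, hjw, ← hge, (hg.pow e).coeff_natDegree, mul_one]
        · rw [if_neg (by omega), coeff_eq_zero_of_natDegree_lt (by omega : (g ^ e).natDegree < j - w)]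
          simp
      rw [coeff_add, coeff_add, hsum0, hterm1]
      simp only [Nat.sub_self, pow_zero, mul_one, Nat.choose_self, Nat.cast_one]
      rcases eq_or_lt_of_le hj with h | h
      · rw [if_pos h.symm, hc, mul_invOf_cancel_left, ← h, coeff_sub]
        ring
      · rw [if_neg (by omega)]
        have h0 : (f - g ^ (e + 1)).coeff j = 0 := hcoeff j (by omega)
        rw [coeff_sub] at h0
        linear_combination h0
  obtain ⟨g, hg, hgdeg, hgc⟩ := exist m le_rfl
  have hgdlt : (f - g ^ (e + 1)).degree < ((n - m : ℕ) : WithBot ℕ) :=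
    (degree_lt_iff_coeff_zero _ _).mpr fun j hj => hgc j hj
  refine ⟨g, ⟨hg, hgdeg, hgdlt⟩, ?_⟩
  rintro g' ⟨hg', hg'deg, hg'lt⟩
  by_contra hne
  have hp : g' - g ≠ 0 := sub_ne_zero.mpr hne
  set S := ∑ i ∈ Finset.range (e + 1), g' ^ i * g ^ (e + 1 - 1 - i) with hS
  have hfac : S * (g' - g) = g' ^ (e + 1) - g ^ (e + 1) := geom_sum₂_mul g' g (e + 1)
  have key : ∀ i ∈ Finset.range (e + 1), (g' ^ i * g ^ (e + 1 - 1 - i)).Monic ∧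
      (g' ^ i * g ^ (e + 1 - 1 - i)).natDegree = e * m := by
    intro i hi
    rw [Finset.mem_range] at hi
    refine ⟨(hg'.pow i).mul (hg.pow _), ?_⟩
    rw [(hg'.pow i).natDegree_mul (hg.pow _), hg'.natDegree_pow, hg.natDegree_pow,
      hg'deg, hgdeg, ← add_mul]
    congr 1
    omega
  have hScoeff : S.coeff (e * m) = ((e + 1 : ℕ) : R) := by
    rw [hS, finset_sum_coeff]
    have h1 : ∀ i ∈ Finset.range (e + 1),
        (g' ^ i * g ^ (e + 1 - 1 - i)).coeff (e * m) = 1 := by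
      intro i hi
      have h2 := (key i hi).1.coeff_natDegree
      rwa [(key i hi).2] at h2
    rw [Finset.sum_congr rfl h1, Finset.sum_const, Finset.card_range, nsmul_eq_mul, mul_one]
  have hSnd : S.natDegree ≤ e * m := by
    rw [hS]
    exact natDegree_sum_le_of_forall_le _ _ fun i hi => le_of_eq (key i hi).2
  set S' := ⅟((e + 1 : ℕ) : R) • S with hS'
  have hS'c : S'.coeff (e * m) = 1 := by
    rw [hS', coeff_smul, hScoeff, smul_eq_mul, invOf_mul_self]
  have hS'nd : S'.natDegree ≤ e * m := (natDegree_smul_le _ _).trans hSnd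
  have hS'mono : S'.Monic := monic_of_natDegree_le_of_coeff_eq_one _ hS'nd hS'c
  have hS'deg : S'.degree = ((e * m : ℕ) : WithBot ℕ) := by
    rw [degree_eq_natDegree hS'mono.ne_zero,
      le_antisymm hS'nd (le_natDegree_of_ne_zero (hS'c ▸ one_ne_zero))]
  have hdmul : ((g' - g) * S').degree = (g' - g).degree + ((e * m : ℕ) : WithBot ℕ) := by
    rw [hS'mono.degree_mul, hS'deg]
  have heq : (g' - g) * S' = ⅟((e + 1 : ℕ) : R) • (g' ^ (e + 1) - g ^ (e + 1)) := by
    rw [← hfac, hS', mul_smul_comm, mul_comm]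
  have hlt : ((g' - g) * S').degree < ((n - m : ℕ) : WithBot ℕ) := by
    rw [heq]
    refine lt_of_le_of_lt (degree_smul_le _ _) ?_
    have hrw : g' ^ (e + 1) - g ^ (e + 1) = (f - g ^ (e + 1)) - (f - g' ^ (e + 1)) := by ring
    rw [hrw]
    exact lt_of_le_of_lt (degree_sub_le _ _) (max_lt hgdlt hg'lt)
  rw [hdmul, degree_eq_natDegree hp] at hlt
  have hcon : (g' - g).natDegree + e * m < n - m := by exact_mod_cast hlt
  have hem : n - m = e * m := Nat.sub_eq_of_eq_add hM.symm
  rw [hem] at hcon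
  exact Nat.not_lt.mpr (Nat.le_add_left _ _) hcon
end

section
/- Let K be an algebraically closed field of characteristic zero and let c ∈ K*. The polynomial F = y^n - c·x_1^{α_1}···x_e^{α_e} is irreducible in K[[x_1,...,x_e]][y] if and only if gcd(n, α_1, ..., α_e) = 1. -/
open Polynomial

namespace BinomialAux

open MvPowerSeries

variable {K : Type*} [Field K] {e n : ℕ}

/-- Divide all exponents by `n`. -/
noncomputable def qd (e n : ℕ) (μ : Fin e →₀ ℕ) : Fin e →₀ ℕ :=
  μ.mapRange (· / n) (Nat.zero_div n)

lemma qd_smul (hn : 0 < n) (d : Fin e →₀ ℕ) : qd e n (n • d) = d := by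
  ext i
  simp [qd, Finsupp.mapRange_apply, Nat.mul_div_cancel_left _ hn]

lemma qd_zero : qd e n (0 : Fin e →₀ ℕ) = 0 := by
  ext i; simp [qd]

open Classical in
/-- The exponent-scaling map `x^d ↦ x^{n•d}` on multivariate power series. -/
noncomputable def Phi (e n : ℕ) (K : Type*) [Field K] (f : MvPowerSeries (Fin e) K) :
    MvPowerSeries (Fin e) K :=
  fun μ => if n • qd e n μ = μ then coeff (R := K) (qd e n μ) f else 0

open Classical in
lemma coeff_Phi (f : MvPowerSeries (Fin e) K) (μ : Fin e →₀ ℕ) :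
    coeff (R := K) μ (Phi e n K f) =
      if n • qd e n μ = μ then coeff (R := K) (qd e n μ) f else 0 := rfl

lemma coeff_Phi_smul (hn : 0 < n) (f : MvPowerSeries (Fin e) K) (d : Fin e →₀ ℕ) :
    coeff (R := K) (n • d) (Phi e n K f) = coeff (R := K) d f := by
  classical
  rw [coeff_Phi, qd_smul hn, if_pos rfl]

/-- `Phi` as a ring homomorphism. -/
noncomputable def PhiHom (e : ℕ) (K : Type*) [Field K] (hn : 0 < n) :
    MvPowerSeries (Fin e) K →+* MvPowerSeries (Fin e) K where
  toFun := Phi e n K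
  map_zero' := by classical ext μ; simp [coeff_Phi]
  map_add' f g := by
    classical
    ext μ
    simp only [coeff_Phi, map_add]
    split_ifs <;> simp
  map_one' := by
    classical
    ext μ
    rw [coeff_Phi]
    by_cases hμ : μ = 0
    · subst hμ
      rw [if_pos (by rw [qd_zero, smul_zero]), qd_zero]
    · have hr : (MvPowerSeries.coeff (R := K) μ) (1 : MvPowerSeries (Fin e) K) = 0 := by
        rw [MvPowerSeries.coeff_one, if_neg hμ]
      rw [hr]
      split_ifs with hP
      · rw [MvPowerSeries.coeff_one,
          if_neg (fun h => hμ (by rw [← hP, h, smul_zero]))]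
      · rfl
  map_mul' f g := by
    classical
    ext μ
    rw [coeff_Phi, MvPowerSeries.coeff_mul]
    by_cases hP : n • qd e n μ = μ
    · rw [if_pos hP, MvPowerSeries.coeff_mul]
      have hfil : ∀ p ∈ Finset.HasAntidiagonal.antidiagonal μ,
          coeff (R := K) p.1 (Phi e n K f) * coeff (R := K) p.2 (Phi e n K g) ≠ 0 →
          (n • qd e n p.1 = p.1 ∧ n • qd e n p.2 = p.2) := by
        intro p _ hne
        constructor
        · by_contra h
          exact hne (by rw [coeff_Phi, if_neg h, zero_mul])
        · by_contra h
          exact hne (by rw [coeff_Phi (f := g), if_neg h, mul_zero])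
      rw [← Finset.sum_filter_of_ne hfil]
      refine Finset.sum_nbij' (i := fun p => (n • p.1, n • p.2))
        (j := fun p => (qd e n p.1, qd e n p.2)) ?_ ?_ ?_ ?_ ?_
      · intro p hp
        simp only [Finset.HasAntidiagonal.mem_antidiagonal] at hp
        simp only [Finset.mem_filter, Finset.HasAntidiagonal.mem_antidiagonal]
        refine ⟨?_, by rw [qd_smul hn], by rw [qd_smul hn]⟩
        rw [← smul_add, hp, hP]
      · intro p hp
        simp only [Finset.mem_filter, Finset.HasAntidiagonal.mem_antidiagonal] at hp
        obtain ⟨hsum, h1, h2⟩ := hp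
        rw [Finset.HasAntidiagonal.mem_antidiagonal]
        have : n • (qd e n p.1 + qd e n p.2) = n • qd e n μ := by
          rw [smul_add, h1, h2, hsum, hP]
        have hcanc : qd e n p.1 + qd e n p.2 = qd e n μ := by
          ext i
          have h3 := DFunLike.congr_fun this i
          simp only [Finsupp.smul_apply, smul_eq_mul] at h3
          exact Nat.eq_of_mul_eq_mul_left hn h3
        exact hcanc
      · intro p _
        simp [qd_smul hn]
      · intro p hp
        simp only [Finset.mem_filter] at hp
        obtain ⟨_, h1, h2⟩ := hp
        simp [h1, h2]
      · intro p _
        rw [coeff_Phi_smul hn, coeff_Phi_smul hn]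
    · rw [if_neg hP]
      symm
      apply Finset.sum_eq_zero
      intro p hp
      simp only [Finset.HasAntidiagonal.mem_antidiagonal] at hp
      by_cases h1 : n • qd e n p.1 = p.1
      · by_cases h2 : n • qd e n p.2 = p.2
        · exfalso
          apply hP
          have : μ = n • (qd e n p.1 + qd e n p.2) := by
            rw [smul_add, h1, h2, hp]
          rw [this, qd_smul hn]
        · rw [coeff_Phi (f := g), if_neg h2, mul_zero]
      · rw [coeff_Phi, if_neg h1, zero_mul]

lemma PhiHom_monomial (hn : 0 < n) (a : Fin e →₀ ℕ) (x : K) :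
    PhiHom e K hn (monomial (R := K) a x) = monomial (R := K) (n • a) x := by
  classical
  ext μ
  show coeff (R := K) μ (Phi e n K _) = _
  rw [coeff_Phi, MvPowerSeries.coeff_monomial]
  by_cases hμ : μ = n • a
  · subst hμ
    rw [MvPowerSeries.coeff_monomial, qd_smul hn]
    simp
  · have hr : (MvPowerSeries.coeff (R := K) μ) ((MvPowerSeries.monomial (R := K) (n • a)) x) = 0 := by
      rw [MvPowerSeries.coeff_monomial, if_neg hμ]
    rw [hr]
    split_ifs with hP hq
    · exact absurd (by rw [← hP, hq]) hμ
    · rfl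
    · rfl

lemma monomial_pow' (a : Fin e →₀ ℕ) (x : K) (k : ℕ) :
    (monomial (R := K) a x) ^ k = monomial (R := K) (k • a) (x ^ k) := by
  induction k with
  | zero => simpa using (monomial_zero_one (σ := Fin e) (R := K)).symm
  | succ k ih => rw [pow_succ, ih, MvPowerSeries.monomial_mul_monomial, succ_nsmul, pow_succ]

lemma arith_le (hn : 0 < n) (α : Fin e →₀ ℕ)
    (hg : Nat.gcd n (Finset.univ.gcd fun i : Fin e => α i) = 1)
    {j k : ℕ} {d d' : Fin e →₀ ℕ} (hk : k < n) (hjk : j ≤ k)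
    (h : n • d' + j • α = n • d + k • α) : j = k := by
  have hksplit : k • α = (k - j) • α + j • α := by
    rw [← add_smul]; congr 1; omega
  rw [hksplit, ← add_assoc] at h
  have h2 : n • d' = n • d + (k - j) • α := add_right_cancel h
  have hdvd : ∀ i : Fin e, n ∣ (k - j) * α i := by
    intro i
    have hi := DFunLike.congr_fun h2 i
    simp only [Finsupp.smul_apply, Finsupp.add_apply, smul_eq_mul] at hi
    refine ⟨d' i - d i, ?_⟩
    rw [Nat.mul_sub]
    omega
  have hdg : n ∣ (k - j) * Finset.univ.gcd (fun i : Fin e => α i) := by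
    have := Finset.dvd_gcd (s := Finset.univ) (f := fun i : Fin e => (k - j) * α i)
      (fun i _ => hdvd i)
    rwa [Finset.gcd_mul_left, normalize_eq] at this
  have hco : Nat.Coprime n (Finset.univ.gcd fun i : Fin e => α i) := hg
  have hnd : n ∣ (k - j) := hco.dvd_of_dvd_mul_right hdg
  have := Nat.eq_zero_of_dvd_of_lt hnd (by omega)
  omega

lemma arith (hn : 0 < n) (α : Fin e →₀ ℕ)
    (hg : Nat.gcd n (Finset.univ.gcd fun i : Fin e => α i) = 1)
    {j k : ℕ} {d d' : Fin e →₀ ℕ} (hj : j < n) (hk : k < n)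
    (h : n • d' + j • α = n • d + k • α) : j = k := by
  rcases le_total j k with hle | hle
  · exact arith_le hn α hg hk hle h
  · exact (arith_le hn α hg hj hle h.symm).symm

instance : IsDomain (MvPowerSeries (Fin e) K) :=
  NoZeroDivisors.to_isDomain _

lemma PhiHom_apply (hn : 0 < n) (f : MvPowerSeries (Fin e) K) :
    PhiHom e K hn f = Phi e n K f := rfl

lemma key_sep (hn : 0 < n) (α : Fin e →₀ ℕ)
    (hg : Nat.gcd n (Finset.univ.gcd fun i : Fin e => α i) = 1)
    {c' : K} (hc' : c' ≠ 0) (f : ℕ → MvPowerSeries (Fin e) K)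
    (hsum : ∑ j ∈ Finset.range n,
      PhiHom e K hn (f j) * monomial (R := K) (j • α) (c' ^ j) = 0)
    {k : ℕ} (hk : k < n) : f k = 0 := by
  classical
  apply MvPowerSeries.ext
  intro d
  have h0 := congrArg (coeff (R := K) (n • d + k • α)) hsum
  rw [map_zero, map_sum] at h0
  have hterm : ∀ j ∈ Finset.range n, j ≠ k →
      coeff (R := K) (n • d + k • α)
        (PhiHom e K hn (f j) * monomial (R := K) (j • α) (c' ^ j)) = 0 := by
    intro j hj hjk
    rw [MvPowerSeries.coeff_mul_monomial]
    split_ifs with hle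
    · rw [PhiHom_apply, coeff_Phi]
      split_ifs with hP
      · refine absurd (arith hn α hg (d := d) (d' := qd e n (n • d + k • α - j • α))
          (Finset.mem_range.mp hj) hk ?_) hjk
        rw [hP]
        exact tsub_add_cancel_of_le hle
      · rw [zero_mul]
    · rfl
  rw [Finset.sum_eq_single_of_mem k (Finset.mem_range.mpr hk) hterm,
    MvPowerSeries.coeff_mul_monomial, if_pos le_add_self, add_tsub_cancel_right,
    PhiHom_apply, coeff_Phi_smul hn] at h0
  rcases mul_eq_zero.mp h0 with h | h
  · exact h
  · exact absurd h (pow_ne_zero _ hc')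

lemma remainder_zero (hn : 0 < n) (α : Fin e →₀ ℕ)
    (hg : Nat.gcd n (Finset.univ.gcd fun i : Fin e => α i) = 1)
    {c' : K} (hc' : c' ≠ 0)
    (S : Polynomial (MvPowerSeries (Fin e) K)) (hdeg : S.natDegree < n)
    (hev : eval₂ (PhiHom e K hn) (monomial (R := K) α c') S = 0) : S = 0 := by
  have hco : ∀ k, k < n → S.coeff k = 0 := by
    intro k hk
    rw [Polynomial.eval₂_eq_sum_range' (PhiHom e K hn) hdeg] at hev
    simp only [monomial_pow'] at hev
    exact key_sep hn α hg hc' (fun j => S.coeff j) hev hk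
  apply Polynomial.ext
  intro k
  rw [Polynomial.coeff_zero]
  by_cases hk : k < n
  · exact hco k hk
  · exact Polynomial.coeff_eq_zero_of_natDegree_lt (lt_of_lt_of_le hdeg (not_lt.mp hk))

theorem irreducible_of_gcd_eq_one (hn : 0 < n) {c' : K} (hc' : c' ≠ 0) (α : Fin e →₀ ℕ)
    (hg : Nat.gcd n (Finset.univ.gcd fun i : Fin e => α i) = 1) :
    Irreducible ((Polynomial.X : Polynomial (MvPowerSeries (Fin e) K)) ^ n -
      Polynomial.C (monomial (R := K) α (c' ^ n))) := by
  set m : MvPowerSeries (Fin e) K := monomial (R := K) α (c' ^ n) with hm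
  set Y : MvPowerSeries (Fin e) K := monomial (R := K) α c' with hY
  set F : Polynomial (MvPowerSeries (Fin e) K) := Polynomial.X ^ n - Polynomial.C m with hF
  have hFmon : F.Monic := monic_X_pow_sub_C m hn.ne'
  have hevF : eval₂ (PhiHom e K hn) Y F = 0 := by
    rw [hF, eval₂_sub, eval₂_X_pow, Polynomial.eval₂_C, hY, monomial_pow', PhiHom_monomial hn,
      sub_self]
  have hker : ∀ a : Polynomial (MvPowerSeries (Fin e) K),
      eval₂ (PhiHom e K hn) Y a = 0 → F ∣ a := by
    intro a ha
    rw [← modByMonic_eq_zero_iff_dvd hFmon]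
    have heq : a %ₘ F = a - F * (a /ₘ F) := by
      rw [eq_sub_iff_add_eq, modByMonic_add_div a F]
    have hevS : eval₂ (PhiHom e K hn) Y (a %ₘ F) = 0 := by
      rw [heq, ← coe_eval₂RingHom, map_sub, map_mul, coe_eval₂RingHom, hevF, ha, zero_mul,
        sub_zero]
    by_cases hS : a %ₘ F = 0
    · exact hS
    · refine remainder_zero hn α hg hc' _ ?_ hevS
      have hd : (a %ₘ F).degree < F.degree := degree_modByMonic_lt a hFmon
      rw [hF, degree_X_pow_sub_C hn m] at hd
      exact (Polynomial.natDegree_lt_iff_degree_lt hS).mpr hd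
  have hprime : Prime F := by
    refine ⟨?_, ?_, ?_⟩
    · intro h0
      have hdeg := degree_X_pow_sub_C (R := MvPowerSeries (Fin e) K) hn m
      rw [← hF, h0, degree_zero] at hdeg
      simp at hdeg
    · intro hu
      have h1 := natDegree_eq_zero_of_isUnit hu
      rw [hF, natDegree_X_pow_sub_C] at h1
      omega
    · intro a b hab
      have h2 : eval₂ (PhiHom e K hn) Y a * eval₂ (PhiHom e K hn) Y b = 0 := by
        obtain ⟨t, ht⟩ := hab
        rw [← coe_eval₂RingHom, ← map_mul, ht, map_mul, coe_eval₂RingHom, hevF, zero_mul]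
      rcases mul_eq_zero.mp h2 with h | h
      · exact Or.inl (hker a h)
      · exact Or.inr (hker b h)
  exact hprime.irreducible

theorem not_irreducible_of_gcd_ne_one [IsAlgClosed K] (hn : 0 < n)
    (c : K) (hc : c ≠ 0) (α : Fin e →₀ ℕ)
    (h : Nat.gcd n (Finset.univ.gcd fun i : Fin e => α i) ≠ 1) :
    ¬ Irreducible ((Polynomial.X : Polynomial (MvPowerSeries (Fin e) K)) ^ n -
      Polynomial.C (monomial (R := K) α c)) := by
  intro hirr
  have hd0 : 0 < Nat.gcd n (Finset.univ.gcd fun i : Fin e => α i) :=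
    Nat.gcd_pos_of_pos_left _ hn
  set p := (Nat.gcd n (Finset.univ.gcd fun i : Fin e => α i)).minFac with hp
  have hpp : p.Prime := Nat.minFac_prime h
  have hpd : p ∣ Nat.gcd n (Finset.univ.gcd fun i : Fin e => α i) := Nat.minFac_dvd _
  have hpn : p ∣ n := hpd.trans (Nat.gcd_dvd_left _ _)
  have hpα : ∀ i : Fin e, p ∣ α i := fun i =>
    (hpd.trans (Nat.gcd_dvd_right _ _)).trans (Finset.gcd_dvd (Finset.mem_univ i))
  obtain ⟨c', hc'⟩ := IsAlgClosed.exists_pow_nat_eq c hpp.pos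
  set α₁ : Fin e →₀ ℕ := α.mapRange (· / p) (Nat.zero_div p) with hα₁
  have hsm : p • α₁ = α := by
    ext i
    simp only [Finsupp.smul_apply, hα₁, Finsupp.mapRange_apply, smul_eq_mul]
    exact Nat.mul_div_cancel' (hpα i)
  set n₁ := n / p with hn₁
  have hnp : n = n₁ * p := (Nat.div_mul_cancel hpn).symm
  have hn₁pos : 0 < n₁ := Nat.div_pos (Nat.le_of_dvd hn hpn) hpp.pos
  set A : Polynomial (MvPowerSeries (Fin e) K) := Polynomial.X ^ n₁ with hA
  set B : Polynomial (MvPowerSeries (Fin e) K) := Polynomial.C (monomial (R := K) α₁ c') with hB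
  have hFeq : (Polynomial.X : Polynomial (MvPowerSeries (Fin e) K)) ^ n -
      Polynomial.C (monomial (R := K) α c) = A ^ p - B ^ p := by
    rw [hA, hB, ← pow_mul, ← hnp, ← map_pow, monomial_pow', hsm, hc']
  obtain ⟨Q, hQ⟩ := sub_dvd_pow_sub_pow A B p
  rw [hFeq] at hirr
  rcases hirr.isUnit_or_isUnit hQ with hu | hu
  · have h1 := natDegree_eq_zero_of_isUnit hu
    rw [hA, hB, natDegree_X_pow_sub_C] at h1
    omega
  · have hQ0 : Q ≠ 0 := hu.ne_zero
    have hAB0 : A - B ≠ 0 := by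
      intro h0
      have := natDegree_X_pow_sub_C (n := n₁) (r := monomial (R := K) α₁ c')
      rw [← hA, ← hB, h0, natDegree_zero] at this
      omega
    have hdeg : (A ^ p - B ^ p).natDegree = n := by
      rw [← hFeq, natDegree_X_pow_sub_C]
    rw [hQ, natDegree_mul hAB0 hQ0, hA, hB, natDegree_X_pow_sub_C,
      natDegree_eq_zero_of_isUnit hu] at hdeg
    have h2 := hpp.two_le
    have h3 : n₁ * 2 ≤ n₁ * p := Nat.mul_le_mul_left _ h2
    omega

end BinomialAux

/-- Let `K` be an algebraically closed field of characteristic zero and `c ∈ K*`.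
The polynomial `F = y^n - c·x_1^{α_1} ⋯ x_e^{α_e}` is irreducible in
`K[[x_1,…,x_e]][y]` if and only if `gcd(n, α_1, …, α_e) = 1`. -/
theorem binomial_irreducible_iff {K : Type*} [Field K] [IsAlgClosed K] [CharZero K]
    (e n : ℕ) (hn : 0 < n) (c : K) (hc : c ≠ 0) (α : Fin e →₀ ℕ) :
    Irreducible ((X : Polynomial (MvPowerSeries (Fin e) K)) ^ n -
        C ((MvPowerSeries.monomial (R := K) α) c)) ↔
      Nat.gcd n (Finset.univ.gcd fun i : Fin e => α i) = 1 := by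
  constructor
  · intro hirr
    by_contra h
    exact BinomialAux.not_irreducible_of_gcd_ne_one hn c hc α h hirr
  · intro hg
    obtain ⟨c', hc'⟩ := IsAlgClosed.exists_pow_nat_eq c hn
    have hc'0 : c' ≠ 0 := by
      rintro rfl
      rw [zero_pow hn.ne'] at hc'
      exact hc hc'.symm
    have := BinomialAux.irreducible_of_gcd_eq_one hn hc'0 α hg
    rwa [hc'] at this
end

section
/- Let K be an algebraically closed field of characteristic zero, f ∈ K[[x_1,...,x_e]][y] an irreducible quasi-ordinary polynomial of degree n with characteristic exponents m_1 < ... < m_h. Define lattices M_0 = (nℤ)^e and M_i = (nℤ)^e + Σ_{j≤i} m_j ℤ. Then the product of the indices e_i = [M_i : M_{i-1}] over i = 1,...,h equals n. -/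
open Polynomial

noncomputable section

/-! ### Basic notions for quasi-ordinary polynomials

`K[[x_1,…,x_e]]` is modelled by `MvPowerSeries (Fin e) K`.  Below:
* `expDeg p` is the total degree of an exponent `p`;
* `IsExp u p` says that `p = exp u`, the lexicographically greatest exponent of the
  lowest-degree homogeneous component of `u`;
* `rescalePow n u` is `u(t_1^n, …, t_e^n)`;
* `evalAt n f y` is `f(t_1^n, …, t_e^n, y(t))` for `f ∈ K[[x]][y]`;
* `scaleVars w y` is `y(w_1 t_1, …, w_e t_e)`;
* `polyDisc f` is the `y`-discriminant of `f` (a Sylvester determinant);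
* `IsQuasiOrdinary f` says that this discriminant is a monomial times a unit;
* `IsRootSystem n f y w` records the Abhyankar–Jung factorization
  `f(t_1^n,…,t_e^n,y) = ∏ᵢ (y - y(w^i_1 t_1, …, w^i_e t_e))`;
* `IsCharExponents n h y m` says `m 1 < ⋯ < m h` are the characteristic exponents
  (1-based indexing);
* `Dchar`/`dchar` are the gcd-of-minors sequences `(D_k)`, `(d_k)` and `rchar` is the
  sequence `(r_k)` of semigroup generators. -/

/-- Total degree of an exponent. -/
def expDeg {e : ℕ} (p : Fin e →₀ ℕ) : ℕ := p.sum fun _ k => k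

/-- `p` is `exp u`: `p` lies in the support, has minimal total degree there, and is
lexicographically greatest among the exponents of minimal total degree. -/
def IsExp {e : ℕ} {K : Type*} [Field K] (u : MvPowerSeries (Fin e) K)
    (p : Fin e →₀ ℕ) : Prop :=
  MvPowerSeries.coeff p u ≠ 0 ∧
  (∀ q, MvPowerSeries.coeff q u ≠ 0 → expDeg p ≤ expDeg q) ∧
  (∀ q, MvPowerSeries.coeff q u ≠ 0 → expDeg q = expDeg p → toLex q ≤ toLex p)

/-- The substitution `x_i ↦ t_i^n` on power series. -/
def rescalePow {e : ℕ} {K : Type*} [Field K] (n : ℕ)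
    (u : MvPowerSeries (Fin e) K) : MvPowerSeries (Fin e) K :=
  fun p => if ∀ i, n ∣ p i then
    MvPowerSeries.coeff (Finsupp.mapRange (· / n) (Nat.zero_div n) p) u else 0

/-- `f(t_1^n, …, t_e^n, y)` viewed as a polynomial in `y`. -/
def rescalePoly {e : ℕ} {K : Type*} [Field K] (n : ℕ)
    (f : Polynomial (MvPowerSeries (Fin e) K)) : Polynomial (MvPowerSeries (Fin e) K) :=
  ∑ k ∈ Finset.range (f.natDegree + 1), C (rescalePow n (f.coeff k)) * X ^ k

/-- `f(t_1^n, …, t_e^n, y(t))`. -/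
def evalAt {e : ℕ} {K : Type*} [Field K] (n : ℕ)
    (f : Polynomial (MvPowerSeries (Fin e) K)) (y : MvPowerSeries (Fin e) K) :
    MvPowerSeries (Fin e) K :=
  ∑ k ∈ Finset.range (f.natDegree + 1), rescalePow n (f.coeff k) * y ^ k

/-- `y(w_1 t_1, …, w_e t_e)`. -/
def scaleVars {e : ℕ} {K : Type*} [Field K] (w : Fin e → K)
    (y : MvPowerSeries (Fin e) K) : MvPowerSeries (Fin e) K :=
  fun p => (∏ i, w i ^ p i) * MvPowerSeries.coeff p y

/-- The Sylvester matrix of `f` (of formal degree `n`) and `g` (of formal degree `m`). -/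
def sylvester {R : Type*} [CommRing R] (n m : ℕ) (f g : Polynomial R) :
    Matrix (Fin (n + m)) (Fin (n + m)) R :=
  fun i j =>
    if (i : ℕ) < m then (if (i : ℕ) ≤ (j : ℕ) then f.coeff ((j : ℕ) - (i : ℕ)) else 0)
    else (if (i : ℕ) - m ≤ (j : ℕ) then g.coeff ((j : ℕ) - ((i : ℕ) - m)) else 0)

/-- The `y`-discriminant of `f`, as the resultant of `f` and its derivative. -/
def polyDisc {R : Type*} [CommRing R] (f : Polynomial R) : R :=
  (sylvester f.natDegree (f.natDegree - 1) f f.derivative).det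

/-- `f` is quasi-ordinary: its `y`-discriminant is a monomial times a unit. -/
def IsQuasiOrdinary {e : ℕ} {K : Type*} [Field K]
    (f : Polynomial (MvPowerSeries (Fin e) K)) : Prop :=
  ∃ (N : Fin e →₀ ℕ) (u : MvPowerSeries (Fin e) K), IsUnit u ∧
    polyDisc f = (MvPowerSeries.monomial N) 1 * u

/-- Root system of an irreducible quasi-ordinary polynomial coming from the
Abhyankar–Jung theorem: `f(t_1^n,…,t_e^n,y) = ∏ᵢ (y - y(wⁱ₁ t_1, …, wⁱ_e t_e))`
where the `wⁱ` are `e`-tuples of `n`-th roots of unity giving distinct conjugates. -/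
def IsRootSystem {e : ℕ} {K : Type*} [Field K] (n : ℕ)
    (f : Polynomial (MvPowerSeries (Fin e) K)) (y : MvPowerSeries (Fin e) K)
    (w : Fin n → Fin e → K) : Prop :=
  (∀ i j, (w i j) ^ n = 1) ∧
  Function.Injective (fun i => scaleVars (w i) y) ∧
  rescalePoly n f = ∏ i : Fin n, (X - C (scaleVars (w i) y))

/-- The vector of an exponent, over `ℤ`. -/
def toIntVec {e : ℕ} (p : Fin e →₀ ℕ) : Fin e → ℤ := fun i => (p i : ℤ)

/-- The vector of an exponent, over `ℚ`. -/
def toRatVec {e : ℕ} (p : Fin e →₀ ℕ) : Fin e → ℚ := fun i => (p i : ℚ)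

/-- The lattice `(nℤ)^e + Σ_{q ∈ s} qℤ` inside `ℤ^e`. -/
def latticeOf (e n : ℕ) (s : Set (Fin e →₀ ℕ)) : Submodule ℤ (Fin e → ℤ) :=
  Submodule.span ℤ ((Set.range fun i : Fin e => (n : ℤ) • Pi.single i 1) ∪
    ((fun q : Fin e →₀ ℕ => toIntVec q) '' s))

/-- The lattice `M_k = (nℤ)^e + m_1 ℤ + ⋯ + m_k ℤ` (1-based indexing of `m`). -/
def latticeUpTo {e : ℕ} (n : ℕ) (m : ℕ → (Fin e →₀ ℕ)) (k : ℕ) :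
    Submodule ℤ (Fin e → ℤ) :=
  latticeOf e n {q | ∃ j, 1 ≤ j ∧ j ≤ k ∧ q = m j}

/-- `m 1 < m 2 < ⋯ < m h` is the sequence of characteristic exponents of a root `y`
of an irreducible quasi-ordinary polynomial of degree `n` (1-based indexing):
they increase coordinate-wise, every exponent in the support of `y` lies in the
lattice generated by `(nℤ)^e` and the characteristic exponents of smaller or equal
total degree, each `m i` is not in the lattice generated by the previous ones, and
each `m i` is in the support of `y`. -/
def IsCharExponents {e : ℕ} {K : Type*} [Field K] (n h : ℕ)
    (y : MvPowerSeries (Fin e) K) (m : ℕ → (Fin e →₀ ℕ)) : Prop :=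
  (∀ k l, 1 ≤ k → k < l → l ≤ h → ∀ i, m k i < m l i) ∧
  (∀ p, MvPowerSeries.coeff p y ≠ 0 →
    toIntVec p ∈ latticeOf e n
      {q | ∃ k, 1 ≤ k ∧ k ≤ h ∧ q = m k ∧ expDeg (m k) ≤ expDeg p}) ∧
  (∀ k, 1 ≤ k → k ≤ h → toIntVec (m k) ∉ latticeUpTo n m (k - 1)) ∧
  (∀ k, 1 ≤ k → k ≤ h → MvPowerSeries.coeff (m k) y ≠ 0)

/-- The gcd of all `e × e` minors of a matrix with `e` rows. -/
def gcdMinors {e : ℕ} {c : Type*} [Fintype c] [DecidableEq c]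
    (M : Matrix (Fin e) c ℤ) : ℤ :=
  Finset.gcd (Finset.univ.filter fun g : Fin e → c => Function.Injective g)
    fun g => (M.submatrix id g).det

/-- `D_k`: the gcd of the `e × e` minors of `(n·I_e | m_1ᵀ | ⋯ | m_{k-1}ᵀ)`
(so `D 1 = n^e`). -/
def Dchar (e n : ℕ) (m : ℕ → (Fin e →₀ ℕ)) (k : ℕ) : ℤ :=
  gcdMinors (fun i (j : Fin e ⊕ Fin (k - 1)) =>
    Sum.elim (fun j' : Fin e => if i = j' then (n : ℤ) else 0)
      (fun j' : Fin (k - 1) => ((m ((j' : ℕ) + 1)) i : ℤ)) j)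

/-- The gcd sequence `d_k = D_k / n^{e-1}`; in particular `d 1 = n`. -/
def dchar (e n : ℕ) (m : ℕ → (Fin e →₀ ℕ)) (k : ℕ) : ℕ :=
  (Dchar e n m k).toNat / n ^ (e - 1)

/-- The generators `r_k ∈ ℚ^e`: `r 1 = m 1`, and
`r (k+1) = e_k r_k + m_{k+1} - m_k` with `e_k = d_k / d_{k+1}`. -/
def rchar (e n : ℕ) (m : ℕ → (Fin e →₀ ℕ)) : ℕ → (Fin e → ℚ)
  | 0 => 0
  | 1 => toRatVec (m 1)
  | k + 2 => fun i =>
    ((dchar e n m (k + 1) / dchar e n m (k + 2) : ℕ) : ℚ) * rchar e n m (k + 1) i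
      + (((m (k + 2)) i : ℚ) - ((m (k + 1)) i : ℚ))

/-- The canonical basis `r_0^i = n·e_i` of `(nℤ)^e`, as vectors in `ℚ^e`. -/
def rzero (e n : ℕ) (i : Fin e) : Fin e → ℚ := fun j => if j = i then (n : ℚ) else 0

end


/-! ### Auxiliary development for the proof -/

noncomputable section QOAux

open Polynomial

namespace QOAux

variable {K : Type*} [Field K] {e n : ℕ}

lemma coeff_scaleVars (w : Fin e → K) (y : MvPowerSeries (Fin e) K) (p : Fin e →₀ ℕ) :
    MvPowerSeries.coeff p (scaleVars w y) = (∏ i, w i ^ p i) * MvPowerSeries.coeff p y := rfl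

/-- `scaleVars` as a ring homomorphism. -/
def scaleVarsHom (w : Fin e → K) :
    MvPowerSeries (Fin e) K →+* MvPowerSeries (Fin e) K where
  toFun := scaleVars w
  map_one' := by
    ext p
    rw [coeff_scaleVars]
    rcases eq_or_ne p 0 with rfl | hp
    · simp
    · simp [MvPowerSeries.coeff_one, hp]
  map_mul' u v := by
    ext p
    show (∏ i, w i ^ p i) * MvPowerSeries.coeff p (u * v)
        = MvPowerSeries.coeff p (scaleVars w u * scaleVars w v)
    rw [MvPowerSeries.coeff_mul, MvPowerSeries.coeff_mul, Finset.mul_sum]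
    refine Finset.sum_congr rfl fun q hq => ?_
    rw [Finset.HasAntidiagonal.mem_antidiagonal] at hq
    rw [coeff_scaleVars, coeff_scaleVars, ← hq]
    rw [show (∏ i, w i ^ (q.1 + q.2) i) = (∏ i, w i ^ q.1 i) * (∏ i, w i ^ q.2 i) by
      rw [← Finset.prod_mul_distrib]
      exact Finset.prod_congr rfl fun i _ => by simp [pow_add]]
    ring
  map_zero' := by
    ext p
    show (∏ i, w i ^ p i) * MvPowerSeries.coeff p 0 = MvPowerSeries.coeff p 0
    simp
  map_add' u v := by
    ext p
    show (∏ i, w i ^ p i) * MvPowerSeries.coeff p (u + v)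
        = MvPowerSeries.coeff p (scaleVars w u + scaleVars w v)
    rw [map_add, map_add, coeff_scaleVars, coeff_scaleVars]
    ring

lemma scaleVarsHom_apply (w : Fin e → K) (y : MvPowerSeries (Fin e) K) :
    scaleVarsHom w y = scaleVars w y := rfl

lemma scaleVars_scaleVars (w w' : Fin e → K) (y : MvPowerSeries (Fin e) K) :
    scaleVars w (scaleVars w' y) = scaleVars (w * w') y := by
  ext1 p
  show (∏ i, w i ^ p i) * ((∏ i, w' i ^ p i) * _) = (∏ i, (w i * w' i) ^ p i) * _
  rw [← mul_assoc, ← Finset.prod_mul_distrib]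
  simp [mul_pow]

lemma scaleVars_one (y : MvPowerSeries (Fin e) K) : scaleVars (1 : Fin e → K) y = y := by
  ext1 p
  show (∏ i, (1:K) ^ p i) * _ = _
  simp

lemma scaleVars_rescalePow (w : Fin e → K) (hw : ∀ i, w i ^ n = 1)
    (u : MvPowerSeries (Fin e) K) : scaleVars w (rescalePow n u) = rescalePow n u := by
  ext1 p
  show (∏ i, w i ^ p i) * rescalePow n u p = rescalePow n u p
  unfold rescalePow
  split_ifs with hp
  · have : (∏ i, w i ^ p i) = 1 := by
      refine Finset.prod_eq_one fun i _ => ?_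
      obtain ⟨c, hc⟩ := hp i
      rw [hc, pow_mul, hw i, one_pow]
    rw [this, one_mul]
  · rw [mul_zero]

lemma map_rescalePoly (w : Fin e → K) (hw : ∀ i, w i ^ n = 1)
    (f : Polynomial (MvPowerSeries (Fin e) K)) :
    (rescalePoly n f).map (scaleVarsHom w) = rescalePoly n f := by
  unfold rescalePoly
  rw [Polynomial.map_sum]
  refine Finset.sum_congr rfl fun k _ => ?_
  rw [Polynomial.map_mul, Polynomial.map_pow, Polynomial.map_C, Polynomial.map_X,
    scaleVarsHom_apply, scaleVars_rescalePow w hw]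

lemma exists_eq_root (hn : 0 < n) (f : Polynomial (MvPowerSeries (Fin e) K))
    (y : MvPowerSeries (Fin e) K) (w : Fin n → Fin e → K)
    (hw : ∀ i j, (w i j) ^ n = 1)
    (hfac : rescalePoly n f = ∏ i : Fin n, (X - C (scaleVars (w i) y)))
    (w' : Fin e → K) (hw' : ∀ j, w' j ^ n = 1) :
    ∃ i : Fin n, scaleVars w' y = scaleVars (w i) y := by
  set u : Fin e → K := fun j => w' j * (w ⟨0, hn⟩ j) ^ (n - 1) with hu
  have hun : ∀ j, u j ^ n = 1 := by
    intro j
    rw [hu]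
    simp only
    rw [mul_pow, hw' j, ← pow_mul, mul_comm (n-1) n, pow_mul, hw, one_pow, one_mul]
  have huw : u * w ⟨0, hn⟩ = w' := by
    funext j
    show w' j * (w ⟨0, hn⟩ j) ^ (n - 1) * w ⟨0, hn⟩ j = w' j
    rw [mul_assoc, ← pow_succ, Nat.sub_add_cancel hn, hw, mul_one]
  have hmap := congrArg (Polynomial.map (scaleVarsHom u)) hfac
  rw [map_rescalePoly u hun, hfac, Polynomial.map_prod] at hmap
  simp only [Polynomial.map_sub, Polynomial.map_X, Polynomial.map_C, scaleVarsHom_apply] at hmap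
  set z := scaleVars w' y with hz
  have hz0 : z = scaleVars u (scaleVars (w ⟨0, hn⟩) y) := by
    rw [scaleVars_scaleVars, huw]
  have hevalr : Polynomial.eval z
      (∏ i : Fin n, (X - C (scaleVars u (scaleVars (w i) y)))) = 0 := by
    rw [Polynomial.eval_prod]
    refine Finset.prod_eq_zero (Finset.mem_univ ⟨0, hn⟩) ?_
    rw [Polynomial.eval_sub, Polynomial.eval_X, Polynomial.eval_C, hz0, sub_self]
  rw [← hmap, Polynomial.eval_prod] at hevalr
  obtain ⟨i, -, hi⟩ := Finset.prod_eq_zero_iff.mp hevalr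
  refine ⟨i, ?_⟩
  rw [Polynomial.eval_sub, Polynomial.eval_X, Polynomial.eval_C, sub_eq_zero] at hi
  exact hi

/-! #### The group of tuples of `n`-th roots of unity -/

/-- The tuple of field elements underlying a tuple of roots of unity. -/
def tup (g : Fin e → rootsOfUnity n K) : Fin e → K := fun i => ((g i : Kˣ) : K)

lemma tup_pow_eq_one (g : Fin e → rootsOfUnity n K) (i : Fin e) : tup g i ^ n = 1 := by
  have := (g i).2
  rw [mem_rootsOfUnity] at this
  have := congrArg (Units.val) this
  simpa [tup] using this

lemma tup_mul (g g' : Fin e → rootsOfUnity n K) : tup (g * g') = tup g * tup g' := by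
  funext i
  simp [tup]

lemma tup_one : tup (1 : Fin e → rootsOfUnity n K) = 1 := by
  funext i
  simp [tup]

/-- The stabilizer of `y` in the group of tuples of roots of unity. -/
def stab (y : MvPowerSeries (Fin e) K) : Subgroup (Fin e → rootsOfUnity n K) where
  carrier := {g | scaleVars (tup g) y = y}
  one_mem' := by simp [tup_one, scaleVars_one]
  mul_mem' := by
    intro a b ha hb
    simp only [Set.mem_setOf_eq] at *
    rw [tup_mul, ← scaleVars_scaleVars, hb, ha]
  inv_mem' := by
    intro a ha
    simp only [Set.mem_setOf_eq] at *
    conv_lhs => rw [← ha]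
    rw [scaleVars_scaleVars, ← tup_mul, inv_mul_cancel, tup_one, scaleVars_one]

lemma scaleVars_tup_eq_iff (y : MvPowerSeries (Fin e) K)
    (a b : Fin e → rootsOfUnity n K) :
    scaleVars (tup a) y = scaleVars (tup b) y ↔ a⁻¹ * b ∈ stab y := by
  constructor
  · intro hab
    show scaleVars (tup (a⁻¹ * b)) y = y
    rw [tup_mul, ← scaleVars_scaleVars, ← hab, scaleVars_scaleVars, ← tup_mul,
      inv_mul_cancel, tup_one, scaleVars_one]
  · intro hab
    have : scaleVars (tup (a⁻¹ * b)) y = y := hab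
    have h2 := congrArg (scaleVars (tup a)) this
    rw [scaleVars_scaleVars, ← tup_mul, mul_inv_cancel_left] at h2
    exact h2.symm


/-! #### Characters attached to tuples of roots of unity -/

/-- The additive character of `ℤ^e` attached to a tuple of roots of unity. -/
def chi (g : Fin e → rootsOfUnity n K) : (Fin e → ℤ) →+ Additive Kˣ where
  toFun v := Additive.ofMul (∏ i, (g i : Kˣ) ^ (v i))
  map_zero' := by simp
  map_add' u v := by
    simp only [Pi.add_apply, zpow_add, Finset.prod_mul_distrib]
    rfl

lemma chi_apply (g : Fin e → rootsOfUnity n K) (v : Fin e → ℤ) :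
    chi g v = Additive.ofMul (∏ i, (g i : Kˣ) ^ (v i)) := rfl

lemma chi_single (g : Fin e → rootsOfUnity n K) (i : Fin e) :
    chi g (Pi.single i 1) = Additive.ofMul (g i : Kˣ) := by
  rw [chi_apply]
  congr 1
  rw [Finset.prod_eq_single i (fun j _ hj => by simp [Pi.single_apply, hj])
    (fun hi => absurd (Finset.mem_univ i) hi)]
  simp

lemma val_toMul_chi_toIntVec (g : Fin e → rootsOfUnity n K) (p : Fin e →₀ ℕ) :
    ((Additive.toMul (chi g (toIntVec p)) : Kˣ) : K) = ∏ i, tup g i ^ p i := by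
  rw [chi_apply, toMul_ofMul, Units.coe_prod]
  refine Finset.prod_congr rfl fun i _ => ?_
  show (((g i : Kˣ) ^ ((p i : ℤ)) : Kˣ) : K) = tup g i ^ p i
  rw [zpow_natCast, Units.val_pow_eq_pow_val]
  rfl

lemma chi_toIntVec_eq_zero_iff (g : Fin e → rootsOfUnity n K) (p : Fin e →₀ ℕ) :
    chi g (toIntVec p) = 0 ↔ (∏ i, tup g i ^ p i) = 1 := by
  rw [← val_toMul_chi_toIntVec]
  constructor
  · intro h; rw [h]; simp
  · intro h
    have h1 : (Additive.toMul (chi g (toIntVec p)) : Kˣ) = 1 := Units.ext (by simpa using h)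
    have h2 : chi g (toIntVec p) = Additive.ofMul 1 := by
      rw [← h1]; rfl
    simpa using h2

lemma mem_stab_iff (y : MvPowerSeries (Fin e) K) (g : Fin e → rootsOfUnity n K) :
    g ∈ stab y ↔ ∀ p, MvPowerSeries.coeff p y ≠ 0 → (∏ i, tup g i ^ p i) = 1 := by
  constructor
  · intro hg p hp
    have h1 := congrArg (MvPowerSeries.coeff p) (show scaleVars (tup g) y = y from hg)
    rw [coeff_scaleVars] at h1
    exact mul_right_cancel₀ hp (by rw [h1, one_mul])
  · intro H
    show scaleVars (tup g) y = y
    ext p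
    rw [coeff_scaleVars]
    rcases eq_or_ne (MvPowerSeries.coeff p y) 0 with h0 | h0
    · rw [h0, mul_zero]
    · rw [H p h0, one_mul]

/-! #### Lattice lemmas -/

lemma latticeOf_mono {s t : Set (Fin e →₀ ℕ)} (hst : s ⊆ t) :
    latticeOf e n s ≤ latticeOf e n t :=
  Submodule.span_mono (Set.union_subset_union_right _ (Set.image_mono hst))

lemma latticeUpTo_mono (m : ℕ → (Fin e →₀ ℕ)) {k l : ℕ} (hkl : k ≤ l) :
    latticeUpTo n m k ≤ latticeUpTo n m l :=
  latticeOf_mono fun q hq => by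
    obtain ⟨j, h1, h2, h3⟩ := hq
    exact ⟨j, h1, h2.trans hkl, h3⟩

lemma nsingle_mem_latticeUpTo (m : ℕ → (Fin e →₀ ℕ)) (k : ℕ) (i : Fin e) :
    (n:ℤ) • Pi.single i 1 ∈ latticeUpTo n m k :=
  Submodule.subset_span (Or.inl ⟨i, rfl⟩)

variable {h : ℕ} {m : ℕ → (Fin e →₀ ℕ)} {y : MvPowerSeries (Fin e) K}

lemma mem_stab_iff_lattice
    (hsupp : ∀ p, MvPowerSeries.coeff p y ≠ 0 →
      toIntVec p ∈ latticeOf e n {q | ∃ k, 1 ≤ k ∧ k ≤ h ∧ q = m k ∧ expDeg (m k) ≤ expDeg p})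
    (hmem : ∀ k, 1 ≤ k → k ≤ h → MvPowerSeries.coeff (m k) y ≠ 0)
    (g : Fin e → rootsOfUnity n K) :
    g ∈ stab y ↔ ∀ v ∈ latticeUpTo n m h, chi g v = 0 := by
  constructor
  · intro hg v hv
    have hker : latticeUpTo n m h ≤ LinearMap.ker (chi g).toIntLinearMap := by
      refine Submodule.span_le.mpr (Set.union_subset ?_ ?_)
      · rintro _ ⟨i, rfl⟩
        simp only [SetLike.mem_coe, LinearMap.mem_ker, AddMonoidHom.coe_toIntLinearMap]
        rw [map_zsmul, chi_single]
        have h1 : ((g i : Kˣ)) ^ (n:ℤ) = 1 := by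
          rw [zpow_natCast]
          exact (mem_rootsOfUnity n (g i : Kˣ)).mp (g i).2
        rw [← ofMul_zpow, h1]
        rfl
      · rintro _ ⟨q, ⟨k, hk1, hk2, rfl⟩, rfl⟩
        simp only [SetLike.mem_coe, LinearMap.mem_ker, AddMonoidHom.coe_toIntLinearMap]
        exact (chi_toIntVec_eq_zero_iff g (m k)).mpr
          ((mem_stab_iff y g).mp hg (m k) (hmem k hk1 hk2))
    exact hker hv
  · intro H
    rw [mem_stab_iff]
    intro p hp
    rw [← chi_toIntVec_eq_zero_iff]
    refine H _ (latticeOf_mono ?_ (hsupp p hp))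
    rintro q ⟨k, h1, h2, h3, -⟩
    exact ⟨k, h1, h2, h3⟩

lemma addHom_ext_pi {B : Type*} [AddCommGroup B] {f f' : (Fin e → ℤ) →+ B}
    (hff : ∀ i, f (Pi.single i 1) = f' (Pi.single i 1)) : f = f' := by
  have hl : f.toIntLinearMap = f'.toIntLinearMap := by
    refine Module.Basis.ext (Pi.basisFun ℤ (Fin e)) fun i => ?_
    simpa using hff i
  exact AddMonoidHom.ext fun v => LinearMap.congr_fun hl v


/-! #### The stabilizer is in bijection with characters of the quotient lattice -/

variable (n) in
lemma toMul_pow_eq_one (hn : 0 < n)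
    (φ : ((Fin e → ℤ) ⧸ (latticeUpTo n m h).toAddSubgroup) →+ Additive Kˣ) (i : Fin e) :
    (Additive.toMul (φ (QuotientAddGroup.mk (Pi.single i 1))) : Kˣ) ^ n = 1 := by
  have h1 : ((QuotientAddGroup.mk ((n:ℤ) • Pi.single i 1) :
      (Fin e → ℤ) ⧸ (latticeUpTo n m h).toAddSubgroup)) = 0 :=
    (QuotientAddGroup.eq_zero_iff _).mpr (nsingle_mem_latticeUpTo m h i)
  have h2 : (n:ℤ) • (QuotientAddGroup.mk (Pi.single i 1) :
      (Fin e → ℤ) ⧸ (latticeUpTo n m h).toAddSubgroup)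
      = QuotientAddGroup.mk ((n:ℤ) • Pi.single i 1) :=
    (map_zsmul (QuotientAddGroup.mk' (latticeUpTo n m h).toAddSubgroup) _ _).symm
  have h3 : (n:ℤ) • φ (QuotientAddGroup.mk (Pi.single i 1)) = 0 := by
    rw [← map_zsmul, h2, h1, map_zero]
  have h4 := congrArg Additive.toMul h3
  rw [toMul_zsmul] at h4
  rw [← zpow_natCast]
  exact h4

variable (n m h) in
/-- The tuple of roots of unity attached to a character of `ℤ^e ⧸ M_h`. -/
def charRoots (hn : 0 < n)
    (φ : ((Fin e → ℤ) ⧸ (latticeUpTo n m h).toAddSubgroup) →+ Additive Kˣ) :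
    Fin e → rootsOfUnity n K := fun i =>
  ⟨Additive.toMul (φ (QuotientAddGroup.mk (Pi.single i 1))),
    (mem_rootsOfUnity n _).mpr (toMul_pow_eq_one n hn φ i)⟩

lemma chi_charRoots (hn : 0 < n)
    (φ : ((Fin e → ℤ) ⧸ (latticeUpTo n m h).toAddSubgroup) →+ Additive Kˣ) :
    chi (charRoots n h m hn φ)
      = φ.comp (QuotientAddGroup.mk' (latticeUpTo n m h).toAddSubgroup) := by
  refine addHom_ext_pi fun i => ?_
  rw [chi_single]
  simp [charRoots]

/-- The stabilizer of `y` is in bijection with additive characters of `ℤ^e ⧸ M_h`. -/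
def stabEquiv (hn : 0 < n)
    (hsupp : ∀ p, MvPowerSeries.coeff p y ≠ 0 →
      toIntVec p ∈ latticeOf e n {q | ∃ k, 1 ≤ k ∧ k ≤ h ∧ q = m k ∧ expDeg (m k) ≤ expDeg p})
    (hmem : ∀ k, 1 ≤ k → k ≤ h → MvPowerSeries.coeff (m k) y ≠ 0) :
    stab (n := n) y ≃
      (((Fin e → ℤ) ⧸ (latticeUpTo n m h).toAddSubgroup) →+ Additive Kˣ) where
  toFun g := QuotientAddGroup.lift (latticeUpTo n m h).toAddSubgroup (chi g.1)
    (fun v hv => AddMonoidHom.mem_ker.mpr ((mem_stab_iff_lattice hsupp hmem g.1).mp g.2 v hv))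
  invFun φ := ⟨charRoots n h m hn φ, by
    refine (mem_stab_iff_lattice hsupp hmem _).mpr fun v hv => ?_
    rw [chi_charRoots hn]
    have h0 : (QuotientAddGroup.mk v :
        (Fin e → ℤ) ⧸ (latticeUpTo n m h).toAddSubgroup) = 0 :=
      (QuotientAddGroup.eq_zero_iff _).mpr hv
    show φ (QuotientAddGroup.mk v) = 0
    rw [h0, map_zero]⟩
  left_inv g := by
    apply Subtype.ext
    funext i
    apply Subtype.ext
    show Additive.toMul (QuotientAddGroup.lift (latticeUpTo n m h).toAddSubgroup (chi g.1)
      (fun v hv => AddMonoidHom.mem_ker.mpr ((mem_stab_iff_lattice hsupp hmem g.1).mp g.2 v hv))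
      (QuotientAddGroup.mk (Pi.single i 1))) = (g.1 i : Kˣ)
    rw [QuotientAddGroup.lift_mk, chi_single, toMul_ofMul]
  right_inv φ := by
    refine QuotientAddGroup.addMonoidHom_ext _ (addHom_ext_pi fun i => ?_)
    simp only [AddMonoidHom.comp_apply, QuotientAddGroup.mk'_apply]
    rw [QuotientAddGroup.lift_mk]
    exact DFunLike.congr_fun (chi_charRoots hn φ) (Pi.single i 1)


/-! #### Counting the stabilizer via duality -/

lemma card_stab_eq [IsAlgClosed K] [CharZero K] (hn : 0 < n)
    (hsupp : ∀ p, MvPowerSeries.coeff p y ≠ 0 →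
      toIntVec p ∈ latticeOf e n {q | ∃ k, 1 ≤ k ∧ k ≤ h ∧ q = m k ∧ expDeg (m k) ≤ expDeg p})
    (hmem : ∀ k, 1 ≤ k → k ≤ h → MvPowerSeries.coeff (m k) y ≠ 0)
    (hfin : Finite ((Fin e → ℤ) ⧸ (latticeUpTo n m h).toAddSubgroup)) :
    Nat.card (stab (n := n) y)
      = Nat.card ((Fin e → ℤ) ⧸ (latticeUpTo n m h).toAddSubgroup) := by
  set Q := (Fin e → ℤ) ⧸ (latticeUpTo n m h).toAddSubgroup with hQ
  haveI : Finite Q := hfin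
  haveI : Finite (Multiplicative Q) := hfin
  haveI : NeZero ((Monoid.exponent (Multiplicative Q) : K)) :=
    ⟨by exact_mod_cast (Monoid.exponent_ne_zero_of_finite (G := Multiplicative Q))⟩
  obtain ⟨E⟩ := CommGroup.monoidHom_mulEquiv_of_hasEnoughRootsOfUnity (Multiplicative Q) K
  calc Nat.card (stab (n := n) y)
      = Nat.card (Q →+ Additive Kˣ) := Nat.card_congr (stabEquiv hn hsupp hmem)
    _ = Nat.card (Multiplicative Q →* Kˣ) :=
        Nat.card_congr AddMonoidHom.toMultiplicativeLeft
    _ = Nat.card (Multiplicative Q) := Nat.card_congr E.toEquiv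
    _ = Nat.card Q := rfl

/-! #### The index of the lattice `M₀ = (nℤ)^e` -/

variable (e n) in
/-- Coordinatewise reduction `ℤ^e → (ℤ/n)^e`. -/
def piCast : (Fin e → ℤ) →+ (Fin e → ZMod n) where
  toFun v := fun i => ((v i : ℤ) : ZMod n)
  map_zero' := by funext i; simp
  map_add' u v := by funext i; push_cast; simp

lemma piCast_apply (v : Fin e → ℤ) (i : Fin e) : piCast e n v i = ((v i : ℤ) : ZMod n) := rfl

lemma piCast_surjective (hn : 0 < n) : Function.Surjective (piCast e n) := by
  haveI : NeZero n := ⟨hn.ne'⟩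
  intro u
  refine ⟨fun i => ((u i).val : ℤ), ?_⟩
  funext i
  show ((((u i).val : ℤ) : ZMod n)) = u i
  rw [Int.cast_natCast]
  exact ZMod.natCast_rightInverse (u i)

lemma latticeUpTo_zero (m : ℕ → (Fin e →₀ ℕ)) :
    latticeUpTo n m 0
      = Submodule.span ℤ (Set.range fun i : Fin e => (n:ℤ) • Pi.single i 1) := by
  unfold latticeUpTo latticeOf
  congr 1
  have he : {q : Fin e →₀ ℕ | ∃ j, 1 ≤ j ∧ j ≤ 0 ∧ q = m j} = ∅ := by
    ext q
    simp only [Set.mem_setOf_eq, Set.mem_empty_iff_false, iff_false, not_exists]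
    intro j hj
    omega
  rw [he, Set.image_empty, Set.union_empty]

lemma ker_piCast :
    (piCast e n).ker
      = (Submodule.span ℤ (Set.range fun i : Fin e =>
          (n:ℤ) • Pi.single i 1)).toAddSubgroup := by
  ext v
  simp only [AddMonoidHom.mem_ker, Submodule.mem_toAddSubgroup]
  constructor
  · intro hv
    have hdvd : ∀ i, (n:ℤ) ∣ v i := by
      intro i
      have h0 : ((v i : ℤ) : ZMod n) = 0 := congrFun hv i
      exact_mod_cast (ZMod.intCast_zmod_eq_zero_iff_dvd _ _).mp h0
    choose c hc using hdvd
    have hv' : v = ∑ i, c i • ((n:ℤ) • Pi.single i 1) := by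
      funext j
      rw [Finset.sum_apply, Finset.sum_eq_single j
        (fun i _ hij => by simp [Pi.single_eq_of_ne (Ne.symm hij)])
        (fun hj => absurd (Finset.mem_univ j) hj)]
      simp only [Pi.smul_apply, Pi.single_eq_same, smul_eq_mul, mul_one]
      rw [(hc j)]
      ring
    rw [hv']
    exact Submodule.sum_mem _ fun i _ =>
      Submodule.smul_mem _ _ (Submodule.subset_span ⟨i, rfl⟩)
  · intro hv
    have hle : Submodule.span ℤ (Set.range fun i : Fin e => (n:ℤ) • Pi.single i 1)
        ≤ LinearMap.ker (piCast e n).toIntLinearMap := by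
      refine Submodule.span_le.mpr ?_
      rintro _ ⟨i, rfl⟩
      simp only [SetLike.mem_coe, LinearMap.mem_ker, AddMonoidHom.coe_toIntLinearMap]
      funext j
      simp only [Pi.zero_apply, piCast_apply, Pi.smul_apply, smul_eq_mul]
      push_cast
      simp
    exact hle hv

lemma index_lattice_zero (hn : 0 < n) (m : ℕ → (Fin e →₀ ℕ)) :
    (latticeUpTo n m 0).toAddSubgroup.index = n ^ e := by
  rw [latticeUpTo_zero, AddSubgroup.index_eq_card, ← ker_piCast,
    Nat.card_congr (QuotientAddGroup.quotientKerEquivOfSurjective _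
      (piCast_surjective hn)).toEquiv, Nat.card_pi]
  simp [Nat.card_zmod]

/-! #### Telescoping the relative indices -/

lemma telescope (m : ℕ → (Fin e →₀ ℕ)) (h : ℕ) :
    ∏ i ∈ Finset.Icc 1 h,
      ((latticeUpTo n m (i - 1)).toAddSubgroup.addSubgroupOf
        (latticeUpTo n m i).toAddSubgroup).index
      = AddSubgroup.relIndex (latticeUpTo n m 0).toAddSubgroup
          (latticeUpTo n m h).toAddSubgroup := by
  induction h with
  | zero => simp [AddSubgroup.relIndex_self]
  | succ k ih =>
    rw [Finset.prod_Icc_succ_top (Nat.one_le_iff_ne_zero.mpr (Nat.succ_ne_zero k)), ih]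
    simp only [Nat.add_sub_cancel]
    exact AddSubgroup.relIndex_mul_relIndex _ _ _
      (fun x hx => latticeUpTo_mono m (Nat.zero_le k) hx)
      (fun x hx => latticeUpTo_mono m (Nat.le_succ k) hx)

end QOAux

end QOAux

open Polynomial in
/-- For an irreducible quasi-ordinary polynomial `f` of degree `n` with characteristic
exponents `m 1 < ⋯ < m h` and lattices `M_i = (nℤ)^e + Σ_{j≤i} m_j ℤ`, the product of
the indices `e_i = [M_i : M_{i-1}]`, `i = 1, …, h`, equals `n`. -/
theorem prod_lattice_indices_eq_degree {K : Type*} [Field K] [IsAlgClosed K] [CharZero K]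
    (e n h : ℕ) (hn : 0 < n) (f : Polynomial (MvPowerSeries (Fin e) K))
    (hmonic : f.Monic) (hdeg : f.natDegree = n) (hirr : Irreducible f)
    (hqo : IsQuasiOrdinary f) (y : MvPowerSeries (Fin e) K) (w : Fin n → Fin e → K)
    (hroot : IsRootSystem n f y w) (m : ℕ → (Fin e →₀ ℕ))
    (hchar : IsCharExponents n h y m) :
    ∏ i ∈ Finset.Icc 1 h,
      ((latticeUpTo n m (i - 1)).toAddSubgroup.addSubgroupOf
        (latticeUpTo n m i).toAddSubgroup).index = n := by
  classical
  obtain ⟨hw, hinj, hfac⟩ := hroot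
  obtain ⟨hlt, hsupp, hnotmem, hmem⟩ := hchar
  haveI : NeZero n := ⟨hn.ne'⟩
  haveI : NeZero ((n : K)) := ⟨Nat.cast_ne_zero.mpr hn.ne'⟩
  have hle : (latticeUpTo n m 0).toAddSubgroup ≤ (latticeUpTo n m h).toAddSubgroup :=
    fun x hx => QOAux.latticeUpTo_mono m (Nat.zero_le h) hx
  rw [QOAux.telescope m h]
  -- Notation
  set c := (latticeUpTo n m h).toAddSubgroup.index with hc
  have key1 : AddSubgroup.relIndex (latticeUpTo n m 0).toAddSubgroup
      (latticeUpTo n m h).toAddSubgroup * c = n ^ e := by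
    rw [hc, AddSubgroup.relIndex_mul_index hle, QOAux.index_lattice_zero hn m]
  have hc0 : c ≠ 0 := by
    intro h0
    rw [h0, mul_zero] at key1
    exact (pow_ne_zero e hn.ne') key1.symm
  have hfin : Finite ((Fin e → ℤ) ⧸ (latticeUpTo n m h).toAddSubgroup) := by
    apply Nat.finite_of_card_ne_zero
    rwa [← AddSubgroup.index_eq_card]
  -- Cardinality of the group of tuples of roots of unity
  have hG : Nat.card (Fin e → rootsOfUnity n K) = n ^ e := by
    rw [Nat.card_pi]
    simp only [HasEnoughRootsOfUnity.natCard_rootsOfUnity K n, Finset.prod_const,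
      Finset.card_univ, Fintype.card_fin]
  -- The set of conjugates of `y` equals the set of roots
  have hrange : Set.range (fun g : Fin e → rootsOfUnity n K => scaleVars (QOAux.tup g) y)
      = Set.range (fun i : Fin n => scaleVars (w i) y) := by
    apply Set.Subset.antisymm
    · rintro _ ⟨g, rfl⟩
      obtain ⟨i, hi⟩ := QOAux.exists_eq_root hn f y w hw hfac (QOAux.tup g)
        (fun j => QOAux.tup_pow_eq_one g j)
      exact ⟨i, hi.symm⟩
    · rintro _ ⟨i, rfl⟩
      refine ⟨fun j => rootsOfUnity.mkOfPowEq (w i j) (hw i j), ?_⟩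
      have htup : QOAux.tup (fun j => rootsOfUnity.mkOfPowEq (w i j) (hw i j)) = w i := by
        funext j
        show ((rootsOfUnity.mkOfPowEq (w i j) (hw i j) : Kˣ) : K) = w i j
        rw [rootsOfUnity.coe_mkOfPowEq]
      show scaleVars (QOAux.tup (fun j => rootsOfUnity.mkOfPowEq (w i j) (hw i j))) y
        = scaleVars (w i) y
      rw [htup]
  -- The number of conjugates is `n`
  have hcount : Nat.card ((Fin e → rootsOfUnity n K) ⧸ QOAux.stab (n := n) y) = n := by
    have E1 : ((Fin e → rootsOfUnity n K) ⧸ QOAux.stab (n := n) y) ≃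
        Quotient (Setoid.ker fun g : Fin e → rootsOfUnity n K =>
          scaleVars (QOAux.tup g) y) := by
      refine Quotient.congrRight fun a b => ?_
      rw [QuotientGroup.leftRel_apply, Setoid.ker_def]
      exact (QOAux.scaleVars_tup_eq_iff y a b).symm
    rw [Nat.card_congr (E1.trans (Setoid.quotientKerEquivRange _)), hrange,
      Nat.card_range_of_injective hinj]
    simp
  -- The cardinality of the stabilizer is the index of `M_h`
  have hstab : Nat.card (QOAux.stab (n := n) y) = c := by
    rw [hc, AddSubgroup.index_eq_card]
    exact QOAux.card_stab_eq hn hsupp hmem hfin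
  have key2 : n * c = n ^ e := by
    have hL := Subgroup.card_eq_card_quotient_mul_card_subgroup (QOAux.stab (n := n) y)
    rw [hcount, hstab, hG] at hL
    exact hL.symm
  have := key1.trans key2.symm
  exact Nat.eq_of_mul_eq_mul_right (Nat.pos_of_ne_zero hc0) this
end
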